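/- arXiv:2406.03142 — 2 statements merged into one kernel-verified Lean document; each statement's English description precedes it below -/
import Mathlib

section
/- For the specific distribution P on {x1,x2} × {A,D} × {0,1} given by P(x1,A,1)=3/8, P(x1,A,0)=1/8, P(x1,D,1)=1/8, P(x1,D,0)=1/8, P(x2,D,0)=1/4 (and 0 elsewhere), the only deterministic classifiers satisfying Demographic Parity are the constant-0 and constant-1 classifiers, each with 0-1 loss 1/2, while the randomized classifier f with f(x1,A)=1/2, f(x1,D)=1, f(x2,A)=f(x2,D)=0 satisfies Demographic Parity and has 0-1 loss 3/8. -/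
open Finset

/-- `P` is a probability distribution on `X × Z × Y` with `Z = Bool` (group, `true` = A,
`false` = D) and `Y = Bool` (label, `true` = 1). -/
def IsDist {X : Type*} [Fintype X] (P : X × Bool × Bool → ℝ) : Prop :=
  (∀ p, 0 ≤ P p) ∧ ∑ p : X × Bool × Bool, P p = 1

/-- mass of the feature-group cell `(x, z)`. -/
noncomputable def cellMass {X : Type*} (P : X × Bool × Bool → ℝ) (x : X) (z : Bool) : ℝ :=
  P (x, z, false) + P (x, z, true)

/-- total mass of group `z`. -/
noncomputable def gMass {X : Type*} [Fintype X] (P : X × Bool × Bool → ℝ) (z : Bool) : ℝ :=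
  ∑ x, cellMass P x z

/-- score of the cell `(x, z)`: `Pr[Y = 1 | X = x, Z = z]`. -/
noncomputable def score {X : Type*} (P : X × Bool × Bool → ℝ) (x : X) (z : Bool) : ℝ :=
  P (x, z, true) / cellMass P x z

/-- A randomized classifier takes values in `[0,1]`. -/
def InUnit {X : Type*} (f : X × Bool → ℝ) : Prop := ∀ p, f p ∈ Set.Icc (0 : ℝ) 1

/-- selection rate of randomized classifier `f` on group `z`: `E[f(X,Z) | Z = z]`. -/
noncomputable def selRate {X : Type*} [Fintype X] (P : X × Bool × Bool → ℝ) (f : X × Bool → ℝ)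
    (z : Bool) : ℝ :=
  (∑ x, f (x, z) * cellMass P x z) / gMass P z

/-- 0-1 loss of randomized classifier `f` under `P`. -/
noncomputable def loss {X : Type*} [Fintype X] (P : X × Bool × Bool → ℝ) (f : X × Bool → ℝ) : ℝ :=
  ∑ x, ∑ z, (P (x, z, true) * (1 - f (x, z)) + P (x, z, false) * f (x, z))

/-- Demographic parity: equal selection rates on the two groups. -/
def DP {X : Type*} [Fintype X] (P : X × Bool × Bool → ℝ) (f : X × Bool → ℝ) : Prop :=
  selRate P f true = selRate P f false

/-- false positive rate of `f` on group `z`: `E[f(X,Z) | Y = 0, Z = z]`. -/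
noncomputable def fpr {X : Type*} [Fintype X] (P : X × Bool × Bool → ℝ) (f : X × Bool → ℝ)
    (z : Bool) : ℝ :=
  (∑ x, f (x, z) * P (x, z, false)) / (∑ x, P (x, z, false))

/-- `f` is a (group-wise) mass-threshold classifier: within each group it accepts a
prefix of the cells sorted in decreasing order of score (fractionally at the boundary). -/
def IsPrefix {X : Type*} (P : X × Bool × Bool → ℝ) (f : X × Bool → ℝ) : Prop :=
  ∀ z x x', 0 < cellMass P x z → 0 < cellMass P x' z →
    score P x' z < score P x z → 0 < f (x', z) → f (x, z) = 1

/-- cells of equal score within a group have been merged, i.e. scores of distinct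
positive-mass cells within a group are distinct ("strictly decreasing" when sorted). -/
def MergedScores {X : Type*} (P : X × Bool × Bool → ℝ) : Prop :=
  ∀ z x x', 0 < cellMass P x z → 0 < cellMass P x' z → score P x z = score P x' z → x = x'

/-- The distribution of Example 1: `x1 = 0`, `x2 = 1`, `A = true`, `D = false`,
label `1 = true`. -/
noncomputable def Pex : Fin 2 × Bool × Bool → ℝ := fun p =>
  if p = (0, true, true) then 3/8
  else if p = (0, true, false) then 1/8
  else if p = (0, false, true) then 1/8
  else if p = (0, false, false) then 1/8
  else if p = (1, false, false) then 1/4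
  else 0

/-- The randomized classifier `f(x1,A) = 1/2`, `f(x1,D) = 1`, `f(x2,·) = 0`. -/
noncomputable def fEx : Fin 2 × Bool → ℝ := fun p =>
  if p = (0, true) then 1/2 else if p = (0, false) then 1 else 0

/-- On `Pex`, the only deterministic DP-fair classifiers are (on positive-mass points)
the constant `0` and constant `1` classifiers, each of loss `1/2`, while the randomized
classifier `fEx` is DP-fair with loss `3/8`. -/
theorem stmt1 :
    (∀ f : Fin 2 × Bool → ℝ, (∀ p, f p = 0 ∨ f p = 1) → DP Pex f →
      ((∀ p : Fin 2 × Bool, 0 < cellMass Pex p.1 p.2 → f p = 0) ∨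
       (∀ p : Fin 2 × Bool, 0 < cellMass Pex p.1 p.2 → f p = 1))) ∧
    loss Pex (fun _ => 0) = 1/2 ∧
    loss Pex (fun _ => 1) = 1/2 ∧
    InUnit fEx ∧ DP Pex fEx ∧ loss Pex fEx = 3/8 := by
  have hC : ∀ x z, cellMass Pex x z = Pex (x, z, false) + Pex (x, z, true) := fun _ _ => rfl
  refine ⟨?_, ?_, ?_, ?_, ?_, ?_⟩
  · intro f hdet hdp
    have hDP : f (0, true) * (1/2) / (1/2) =
        (f (0, false) * (1/4) + f (1, false) * (1/4)) / (1/2) := by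
      have h := hdp
      simp only [DP, selRate, gMass, Fin.sum_univ_two, hC, Pex] at h ⊢
      norm_num at h ⊢
      linarith
    have hz : cellMass Pex 1 true = 0 := by simp [hC, Pex]
    rcases hdet (0, true) with h1 | h1 <;>
    rcases hdet (0, false) with h2 | h2 <;>
    rcases hdet (1, false) with h3 | h3 <;>
    rw [h1, h2, h3] at hDP <;> norm_num at hDP <;>
    [ (left; skip); right ] <;>
    · rintro ⟨x, z⟩ hp
      fin_cases x <;> cases z <;> simp_all
  · simp [loss, Fin.sum_univ_two, Pex]; norm_num
  · simp [loss, Fin.sum_univ_two, Pex]; norm_num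
  · rintro ⟨x, z⟩; fin_cases x <;> cases z <;> simp [fEx] <;> norm_num
  · simp only [DP, selRate, gMass, Fin.sum_univ_two, hC, Pex, fEx]; norm_num
  · simp [loss, Fin.sum_univ_two, Pex, fEx]; norm_num
end

section
/- The minimum over r ∈ [0,1] of L(f_r), the loss of the group-wise mass-threshold classifier with common FPR r, is attained at some FP-boundary: min_{r ∈ I_FP} L(f_r) = min_{r ∈ [0,1]} L(f_r). -/
open Finset

/-- `r` is an FP-boundary if the group-wise mass-threshold classifier with false positive
rate `r` on both groups is deterministic on some group (its threshold sits at a score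
boundary of that group). -/
def IsFPBoundary {X : Type*} [Fintype X] (P : X × Bool × Bool → ℝ) (r : ℝ) : Prop :=
  ∃ f : X × Bool → ℝ, InUnit f ∧ IsPrefix P f ∧
    (∀ x z, 0 < cellMass P x z → score P x z = 1 → f (x, z) = 1) ∧
    (∀ z, fpr P f z = r) ∧
    ∃ z : Bool, ∀ x, 0 < cellMass P x z → (f (x, z) = 0 ∨ f (x, z) = 1)


-- ## Auxiliary lemmas

lemma sum_clamp {α : Type*} (S : Finset α) (p σ : α → ℝ) :
    ∀ s : ℝ, (∀ x ∈ S, 0 < p x) → (∀ x ∈ S, ∀ y ∈ S, σ x = σ y → x = y) →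
    0 ≤ s → s ≤ ∑ x ∈ S, p x →
    ∑ x ∈ S, min (p x) (max 0 (s - ∑ y ∈ S.filter (fun y => σ x < σ y), p y)) = s := by
  classical
  induction S using Finset.strongInduction with
  | _ S ih =>
    intro s hp hσ hs0 hs1
    rcases S.eq_empty_or_nonempty with rfl | hne
    · simp at hs1 ⊢; linarith
    · obtain ⟨x₀, hx₀S, hx₀min⟩ := S.exists_min_image σ hne
      set S' := S.erase x₀ with hS'
      have hsub : S' ⊂ S := Finset.erase_ssubset hx₀S
      have hpow : ∀ x ∈ S, x ≠ x₀ → σ x₀ < σ x := by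
        intro x hx hne'
        rcases lt_or_eq_of_le (hx₀min x hx) with h | h
        · exact h
        · exact absurd (hσ x₀ hx₀S x hx h) (Ne.symm hne')
      -- filters over S equal filters over S'
      have hfilt : ∀ x ∈ S, S.filter (fun y => σ x < σ y) = S'.filter (fun y => σ x < σ y) := by
        intro x hx
        rw [hS', Finset.filter_erase]
        rw [Finset.erase_eq_of_notMem]
        simp only [Finset.mem_filter]
        rintro ⟨-, h⟩
        exact absurd (hx₀min x hx) (not_le.mpr h)
      have hA₀ : S.filter (fun y => σ x₀ < σ y) = S' := by
        ext y
        simp only [Finset.mem_filter, hS', Finset.mem_erase]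
        constructor
        · rintro ⟨hy, hlt⟩
          exact ⟨fun h => by subst h; exact lt_irrefl _ hlt, hy⟩
        · rintro ⟨hne', hy⟩
          exact ⟨hy, hpow y hy hne'⟩
      set P' := ∑ x ∈ S', p x with hP'
      have hP'0 : 0 ≤ P' := Finset.sum_nonneg fun x hx => (hp x (Finset.mem_of_mem_erase hx)).le
      set s' := min s P' with hs'
      have hterm : ∀ x ∈ S', min (p x) (max 0 (s - ∑ y ∈ S'.filter (fun y => σ x < σ y), p y))
          = min (p x) (max 0 (s' - ∑ y ∈ S'.filter (fun y => σ x < σ y), p y)) := by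
        intro x hx
        rcases le_total s P' with h | h
        · rw [hs', min_eq_left h]
        · have hxS := Finset.mem_of_mem_erase hx
          have hins : insert x (S'.filter (fun y => σ x < σ y)) ⊆ S' := by
            intro y hy
            rcases Finset.mem_insert.mp hy with rfl | hy
            · exact hx
            · exact Finset.mem_of_mem_filter y hy
          have hAx : ∑ y ∈ S'.filter (fun y => σ x < σ y), p y + p x ≤ P' := by
            have := Finset.sum_le_sum_of_subset_of_nonneg hins
              (fun y hy _ => (hp y (Finset.mem_of_mem_erase hy)).le)
            rwa [Finset.sum_insert (by simp), add_comm] at this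
          have h1 : p x ≤ s - ∑ y ∈ S'.filter (fun y => σ x < σ y), p y := by linarith
          have h2 : p x ≤ s' - ∑ y ∈ S'.filter (fun y => σ x < σ y), p y := by
            rw [hs', min_eq_right h]; linarith
          rw [min_eq_left (le_max_of_le_right h1), min_eq_left (le_max_of_le_right h2)]
      have hsum : ∑ x ∈ S, min (p x) (max 0 (s - ∑ y ∈ S.filter (fun y => σ x < σ y), p y))
          = min (p x₀) (max 0 (s - P')) + s' := by
        rw [← Finset.add_sum_erase _ _ hx₀S, hA₀]
        congr 1
        rw [Finset.sum_congr rfl fun x hx => by rw [hfilt x (Finset.mem_of_mem_erase hx)],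
          Finset.sum_congr rfl hterm]
        exact ih S' hsub s' (fun x hx => hp x (Finset.mem_of_mem_erase hx))
          (fun x hx y hy h => hσ x (Finset.mem_of_mem_erase hx) y (Finset.mem_of_mem_erase hy) h)
          (le_min hs0 hP'0) (min_le_right _ _)
      rw [hsum]
      have hS : ∑ x ∈ S, p x = p x₀ + P' := by rw [← Finset.add_sum_erase _ _ hx₀S]
      rcases le_total s P' with h | h
      · rw [hs', min_eq_left h, max_eq_left (by linarith), min_eq_right (hp x₀ hx₀S).le, zero_add]
      · rw [hs', min_eq_right h]
        have : max 0 (s - P') = s - P' := max_eq_right (by linarith)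
        rw [this, min_eq_right (by rw [hS] at hs1; linarith)]
        ring

section
variable {X : Type*} [Fintype X] {P : X × Bool × Bool → ℝ}

omit [Fintype X] in
lemma mass_pos (hP : ∀ p, 0 ≤ P p) {x : X} {z : Bool} (h : 0 < P (x, z, false)) :
    0 < cellMass P x z := by
  have := hP (x, z, true); unfold cellMass; linarith

omit [Fintype X] in
lemma score_le_one (hP : ∀ p, 0 ≤ P p) {x : X} {z : Bool} (h : 0 < cellMass P x z) :
    score P x z ≤ 1 := by
  rw [score, div_le_one h]; have := hP (x, z, false); unfold cellMass; linarith

omit [Fintype X] in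
lemma score_lt_one (hP : ∀ p, 0 ≤ P p) {x : X} {z : Bool} (h : 0 < P (x, z, false)) :
    score P x z < 1 := by
  rw [score, div_lt_one (mass_pos hP h)]; unfold cellMass; linarith [hP (x, z, true)]

omit [Fintype X] in
lemma score_one_of (hP : ∀ p, 0 ≤ P p) {x : X} {z : Bool} (hm : 0 < cellMass P x z)
    (h : ¬ 0 < P (x, z, false)) : score P x z = 1 := by
  have h0 : P (x, z, false) = 0 := le_antisymm (not_lt.mp h) (hP _)
  rw [score, cellMass, h0, zero_add, div_self]
  rw [cellMass, h0, zero_add] at hm; exact hm.ne'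

end

noncomputable def thr {X : Type*} [Fintype X] (P : X × Bool × Bool → ℝ) (r : ℝ) :
    X × Bool → ℝ := fun q =>
  if 0 < P (q.1, q.2, false) then
    max 0 (min 1 ((r * (∑ x', P (x', q.2, false))
      - ∑ y ∈ Finset.univ.filter
          (fun y => 0 < P (y, q.2, false) ∧ score P q.1 q.2 < score P y q.2),
          P (y, q.2, false))
      / P (q.1, q.2, false)))
  else 1

lemma clamp_mul {p c : ℝ} (hp : 0 < p) : p * max 0 (min 1 (c / p)) = min p (max 0 c) := by
  rw [mul_max_of_nonneg _ _ hp.le, mul_zero, mul_min_of_nonneg _ _ hp.le, mul_one,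
    mul_div_cancel₀ _ hp.ne', max_min_distrib_left, max_eq_right hp.le]

section
variable {X : Type*} [Fintype X] {P : X × Bool × Bool → ℝ}

lemma thr_inunit (P : X × Bool × Bool → ℝ) (r : ℝ) : ∀ q, thr P r q ∈ Set.Icc (0:ℝ) 1 := by
  intro q
  rw [thr]
  split
  · exact ⟨le_max_left _ _, max_le zero_le_one (min_le_left _ _)⟩
  · exact ⟨zero_le_one, le_refl 1⟩

lemma thr_score_one (hP : ∀ p, 0 ≤ P p) (r : ℝ) :
    ∀ (x : X) (z : Bool), 0 < cellMass P x z → score P x z = 1 → thr P r (x, z) = 1 := by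
  intro x z hm hs
  rw [thr, if_neg]
  intro hpos
  exact absurd hs (ne_of_lt (score_lt_one hP hpos))

lemma thr_prefix (hP : ∀ p, 0 ≤ P p) (r : ℝ) :
    ∀ z (x x' : X), 0 < cellMass P x z → 0 < cellMass P x' z →
      score P x' z < score P x z → 0 < thr P r (x', z) → thr P r (x, z) = 1 := by
  classical
  intro z x x' hmx hmx' hlt hpos
  by_cases hpx' : 0 < P (x', z, false)
  swap
  · exact absurd ((score_one_of hP hmx' hpx') ▸ hlt) (not_lt.mpr (score_le_one hP hmx))
  by_cases hpx : 0 < P (x, z, false)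
  swap
  · rw [thr, if_neg hpx]
  set s := r * (∑ y, P (y, z, false)) with hs
  have hpos' : 0 < s - ∑ y ∈ Finset.univ.filter
      (fun y => 0 < P (y, z, false) ∧ score P x' z < score P y z), P (y, z, false) := by
    rw [thr] at hpos
    simp only [if_pos hpx'] at hpos
    by_contra hle
    push_neg at hle
    have h1 : (s - ∑ y ∈ Finset.univ.filter
        (fun y => 0 < P (y, z, false) ∧ score P x' z < score P y z), P (y, z, false))
        / P (x', z, false) ≤ 0 :=
      div_nonpos_of_nonpos_of_nonneg (by linarith) hpx'.le
    have h2 := le_trans (min_le_right 1 _) h1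
    rw [max_eq_left h2] at hpos
    exact lt_irrefl _ hpos
  have hxnot : x ∉ Finset.univ.filter
      (fun y => 0 < P (y, z, false) ∧ score P x z < score P y z) := by simp
  have hsub : insert x (Finset.univ.filter
        (fun y => 0 < P (y, z, false) ∧ score P x z < score P y z))
      ⊆ Finset.univ.filter (fun y => 0 < P (y, z, false) ∧ score P x' z < score P y z) := by
    intro y hy
    rcases Finset.mem_insert.mp hy with rfl | hy
    · simp [hpx, hlt]
    · simp only [Finset.mem_filter, Finset.mem_univ, true_and] at hy ⊢
      exact ⟨hy.1, lt_trans hlt hy.2⟩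
  have hmono := Finset.sum_le_sum_of_subset_of_nonneg hsub (fun y _ _ => hP (y, z, false))
  rw [Finset.sum_insert hxnot] at hmono
  have hge : 1 ≤ (s - ∑ y ∈ Finset.univ.filter
      (fun y => 0 < P (y, z, false) ∧ score P x z < score P y z), P (y, z, false))
      / P (x, z, false) := by
    rw [le_div_iff₀ hpx, one_mul]
    linarith
  rw [thr]
  simp only [if_pos hpx]
  rw [min_eq_left hge, max_eq_right zero_le_one]

lemma thr_fpr (hP : ∀ p, 0 ≤ P p) (hm : MergedScores P)
    (h0 : ∀ z, 0 < ∑ x, P (x, z, false))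
    {r : ℝ} (hr0 : 0 ≤ r) (hr1 : r ≤ 1) (z : Bool) : fpr P (thr P r) z = r := by
  set N := ∑ x, P (x, z, false) with hN
  set S := Finset.univ.filter (fun x : X => 0 < P (x, z, false)) with hS
  have hzero : ∀ x ∈ (Finset.univ : Finset X), x ∉ S → P (x, z, false) = 0 := by
    intro x _ hx
    rw [hS, Finset.mem_filter] at hx
    push_neg at hx
    exact le_antisymm (hx (Finset.mem_univ x)) (hP _)
  have hNS : ∑ x ∈ S, P (x, z, false) = N := by
    rw [hN]
    exact Finset.sum_subset (Finset.filter_subset _ _) hzero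
  have hkey : ∑ x, thr P r (x, z) * P (x, z, false) = r * N := by
    rw [← Finset.sum_subset (Finset.filter_subset (fun x => 0 < P (x, z, false)) Finset.univ)
      (fun x hx hxn => by rw [hzero x hx hxn, mul_zero])]
    have hcongr : ∀ x ∈ S, thr P r (x, z) * P (x, z, false)
        = min (P (x, z, false)) (max 0 (r * N - ∑ y ∈ S.filter
            (fun y => score P x z < score P y z), P (y, z, false))) := by
      intro x hx
      have hpx : 0 < P (x, z, false) := by
        rw [hS, Finset.mem_filter] at hx; exact hx.2
      rw [thr]
      simp only [if_pos hpx]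
      rw [mul_comm, clamp_mul hpx, hS, Finset.filter_filter, hN]
    rw [Finset.sum_congr rfl hcongr]
    exact sum_clamp S (fun x => P (x, z, false)) (fun x => score P x z) (r * N)
      (fun x hx => by rw [hS, Finset.mem_filter] at hx; exact hx.2)
      (fun a ha b hb h => hm z a b
        (mass_pos hP (by rw [hS, Finset.mem_filter] at ha; exact ha.2))
        (mass_pos hP (by rw [hS, Finset.mem_filter] at hb; exact hb.2)) h)
      (mul_nonneg hr0 (h0 z).le)
      (by rw [hNS]; nlinarith [h0 z])
  rw [fpr, hkey, ← hN, mul_div_assoc, div_self (h0 z).ne', mul_one]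

end

section new
variable {X : Type*} [Fintype X] {P : X × Bool × Bool → ℝ}

lemma fpr_mem (hP : ∀ p, 0 ≤ P p) (h0 : ∀ z, 0 < ∑ x, P (x, z, false))
    {f : X × Bool → ℝ} (hf : InUnit f) (z : Bool) : fpr P f z ∈ Set.Icc (0:ℝ) 1 := by
  constructor
  · exact div_nonneg (Finset.sum_nonneg fun x _ => mul_nonneg (hf (x, z)).1 (hP _)) (h0 z).le
  · rw [fpr, div_le_one (h0 z)]
    exact Finset.sum_le_sum fun x _ => mul_le_of_le_one_left (hP _) (hf (x, z)).2

lemma det_sum (hP : ∀ p, 0 ≤ P p) (f : X × Bool → ℝ) (z : Bool)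
    (hdet : ∀ x, 0 < cellMass P x z → f (x, z) = 0 ∨ f (x, z) = 1) :
    ∑ x, f (x, z) * P (x, z, false)
      = ∑ x ∈ Finset.univ.filter (fun x => 0 < P (x, z, false) ∧ f (x, z) = 1),
          P (x, z, false) := by
  classical
  rw [Finset.sum_filter]
  refine Finset.sum_congr rfl fun x _ => ?_
  by_cases hp : 0 < P (x, z, false)
  · rcases hdet x (mass_pos hP hp) with h | h
    · rw [if_neg, h, zero_mul]
      rintro ⟨-, h1⟩
      rw [h] at h1; norm_num at h1
    · rw [if_pos ⟨hp, h⟩, h, one_mul]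
  · have hz : P (x, z, false) = 0 := le_antisymm (not_lt.mp hp) (hP _)
    rw [if_neg (fun h : _ ∧ _ => hp h.1), hz, mul_zero]

lemma perturb (hP : ∀ p, 0 ≤ P p) (hm : MergedScores P)
    (h0 : ∀ z, 0 < ∑ x, P (x, z, false))
    {f : X × Bool → ℝ} (hf1 : InUnit f) (hf2 : IsPrefix P f)
    (hf3 : ∀ x z, 0 < cellMass P x z → score P x z = 1 → f (x, z) = 1)
    {r : ℝ} (hf4 : ∀ z, fpr P f z = r) :
    ∃ (r'' : ℝ) (g : X × Bool → ℝ), InUnit g ∧ IsPrefix P g ∧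
      (∀ x z, 0 < cellMass P x z → score P x z = 1 → g (x, z) = 1) ∧
      (∀ z, fpr P g z = r'') ∧
      (∃ z, ∀ x, 0 < cellMass P x z → g (x, z) = 0 ∨ g (x, z) = 1) ∧
      loss P g ≤ loss P f := by
  classical
  by_cases hdet : ∃ z, ∀ x, 0 < cellMass P x z → f (x, z) = 0 ∨ f (x, z) = 1
  · exact ⟨r, f, hf1, hf2, hf3, hf4, hdet, le_refl _⟩
  push_neg at hdet
  choose xx hmassx hfx0 hfx1 using hdet
  set a : Bool → ℝ := fun z => f (xx z, z) with hadef
  have ha0 : ∀ z, 0 < a z := fun z => lt_of_le_of_ne (hf1 _).1 (Ne.symm (hfx0 z))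
  have ha1 : ∀ z, a z < 1 := fun z => lt_of_le_of_ne (hf1 _).2 (hfx1 z)
  have hpz : ∀ z, 0 < P (xx z, z, false) := by
    intro z; by_contra h
    exact hfx1 z (hf3 (xx z) z (hmassx z) (score_one_of hP (hmassx z) h))
  set c : Bool → ℝ := fun z => (∑ x, P (x, z, false)) / P (xx z, z, false) with hcdef
  have hc : ∀ z, 0 < c z := fun z => div_pos (h0 z) (hpz z)
  have hcp : ∀ z, c z * P (xx z, z, false) = ∑ x, P (x, z, false) := fun z =>
    div_mul_cancel₀ _ (hpz z).ne'
  have uz : ∀ z x, 0 < cellMass P x z → x ≠ xx z → f (x, z) = 0 ∨ f (x, z) = 1 := by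
    intro z x hmx hne
    by_contra h; push_neg at h
    have h0x : 0 < f (x, z) := lt_of_le_of_ne (hf1 _).1 (Ne.symm h.1)
    have h1x : f (x, z) < 1 := lt_of_le_of_ne (hf1 _).2 h.2
    rcases lt_trichotomy (score P x z) (score P (xx z) z) with hlt | heq | hgt
    · exact absurd (hf2 z (xx z) x (hmassx z) hmx hlt h0x) (ne_of_lt (ha1 z))
    · exact hne (hm z x (xx z) hmx (hmassx z) heq)
    · exact absurd (hf2 z x (xx z) hmx (hmassx z) hgt (ha0 z)) (ne_of_lt h1x)
  set d : Bool → ℝ := fun z => c z * (P (xx z, z, false) - P (xx z, z, true)) with hddef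
  set Ssum := d true + d false with hSdef
  set t := if 0 ≤ Ssum then max (-(a true)/c true) (-(a false)/c false)
    else min ((1-a true)/c true) ((1-a false)/c false) with htdef
  have hu_le : ∀ z, -(a z)/c z ≤ t := by
    intro z
    rw [htdef]; split
    · cases z
      · exact le_max_right _ _
      · exact le_max_left _ _
    · have h1 : -(a z)/c z < 0 := div_neg_of_neg_of_pos (neg_lt_zero.mpr (ha0 z)) (hc z)
      have h2 : (0:ℝ) < min ((1-a true)/c true) ((1-a false)/c false) :=
        lt_min (div_pos (by linarith [ha1 true]) (hc true))
          (div_pos (by linarith [ha1 false]) (hc false))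
      linarith
  have hle_v : ∀ z, t ≤ (1 - a z)/c z := by
    intro z
    rw [htdef]; split
    · have h1 : (0:ℝ) < (1 - a z)/c z := div_pos (by linarith [ha1 z]) (hc z)
      have h2 : max (-(a true)/c true) (-(a false)/c false) ≤ 0 :=
        max_le (div_nonpos_of_nonpos_of_nonneg (neg_nonpos.mpr (ha0 true).le) (hc true).le)
          (div_nonpos_of_nonpos_of_nonneg (neg_nonpos.mpr (ha0 false).le) (hc false).le)
      linarith
    · cases z
      · exact min_le_right _ _
      · exact min_le_left _ _
  have ht1 : ∀ z, 0 ≤ a z + t * c z := by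
    intro z
    have h := mul_le_mul_of_nonneg_right (hu_le z) (hc z).le
    rw [div_mul_cancel₀ _ (hc z).ne'] at h
    linarith
  have ht2 : ∀ z, a z + t * c z ≤ 1 := by
    intro z
    have h := mul_le_mul_of_nonneg_right (hle_v z) (hc z).le
    rw [div_mul_cancel₀ _ (hc z).ne'] at h
    linarith
  have htS : t * Ssum ≤ 0 := by
    rw [htdef]; split
    · next h =>
      refine mul_nonpos_of_nonpos_of_nonneg ?_ h
      exact max_le (div_nonpos_of_nonpos_of_nonneg (neg_nonpos.mpr (ha0 true).le) (hc true).le)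
        (div_nonpos_of_nonpos_of_nonneg (neg_nonpos.mpr (ha0 false).le) (hc false).le)
    · next h =>
      push_neg at h
      refine mul_nonpos_of_nonneg_of_nonpos ?_ h.le
      exact (lt_min (div_pos (by linarith [ha1 true]) (hc true))
        (div_pos (by linarith [ha1 false]) (hc false))).le
  have htend : (∃ z, a z + t * c z = 0) ∨ (∃ z, a z + t * c z = 1) := by
    rw [htdef]; split
    · left
      rcases max_choice (-(a true)/c true) (-(a false)/c false) with h | h
      · exact ⟨true, by rw [h, div_mul_cancel₀ _ (hc true).ne']; ring⟩
      · exact ⟨false, by rw [h, div_mul_cancel₀ _ (hc false).ne']; ring⟩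
    · right
      rcases min_choice ((1-a true)/c true) ((1-a false)/c false) with h | h
      · exact ⟨true, by rw [h, div_mul_cancel₀ _ (hc true).ne']; ring⟩
      · exact ⟨false, by rw [h, div_mul_cancel₀ _ (hc false).ne']; ring⟩
  set g : X × Bool → ℝ := fun q => if q.1 = xx q.2 then f q + t * c q.2 else f q with hgdef
  have hgxx : ∀ z, g (xx z, z) = a z + t * c z := by
    intro z
    show (if (xx z) = xx z then f (xx z, z) + t * c z else f (xx z, z)) = _
    rw [if_pos rfl]
  have hgo : ∀ z x, x ≠ xx z → g (x, z) = f (x, z) := by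
    intro z x h
    show (if x = xx z then f (x, z) + t * c z else f (x, z)) = _
    rw [if_neg h]
  have hgu : InUnit g := by
    rintro ⟨x, z⟩
    by_cases h : x = xx z
    · subst h; rw [hgxx z]; exact ⟨ht1 z, ht2 z⟩
    · rw [hgo z x h]; exact hf1 _
  have hgpre : IsPrefix P g := by
    intro z x x' hmx hmx' hlt hpos
    have hxne : x ≠ x' := fun h => by subst h; exact lt_irrefl _ hlt
    by_cases hx' : x' = xx z
    · subst hx'
      have hxne2 : x ≠ xx z := hxne
      rw [hgo z x hxne2]
      exact hf2 z x (xx z) hmx hmx' hlt (ha0 z)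
    · rw [hgo z x' hx'] at hpos
      by_cases hx : x = xx z
      · subst hx
        exact absurd (hf2 z (xx z) x' hmx hmx' hlt hpos) (ne_of_lt (ha1 z))
      · rw [hgo z x hx]
        exact hf2 z x x' hmx hmx' hlt hpos
  have hgone : ∀ x z, 0 < cellMass P x z → score P x z = 1 → g (x, z) = 1 := by
    intro x z hmx hs
    have hne : x ≠ xx z := by
      intro h; subst h
      exact absurd hs (ne_of_lt (score_lt_one hP (hpz z)))
    rw [hgo z x hne]
    exact hf3 x z hmx hs
  have hsum : ∀ z, ∑ x, g (x, z) * P (x, z, false)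
      = (∑ x, f (x, z) * P (x, z, false)) + t * (∑ x, P (x, z, false)) := by
    intro z
    have hpt : ∀ x, g (x, z) * P (x, z, false) = f (x, z) * P (x, z, false)
        + (if x = xx z then t * (∑ x', P (x', z, false)) else 0) := by
      intro x
      by_cases h : x = xx z
      · subst h
        rw [if_pos rfl]
        show (if (xx z) = xx z then f (xx z, z) + t * c z else f (xx z, z)) * _ = _
        rw [if_pos rfl, add_mul, mul_assoc, hcp z]
      · rw [hgo z x h, if_neg h, add_zero]
    rw [Finset.sum_congr rfl (fun x _ => hpt x), Finset.sum_add_distrib]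
    congr 1
    rw [Finset.sum_ite_eq' Finset.univ (xx z) (fun _ => t * (∑ x', P (x', z, false)))]
    rw [if_pos (Finset.mem_univ _)]
  have hfp : ∀ z, ∑ x, f (x, z) * P (x, z, false) = r * (∑ x, P (x, z, false)) := by
    intro z
    have := hf4 z
    rw [fpr] at this
    exact (div_eq_iff (h0 z).ne').mp this
  have hgfpr : ∀ z, fpr P g z = r + t := by
    intro z
    rw [fpr, hsum z, hfp z, div_eq_iff (h0 z).ne']
    ring
  have hgdet : ∃ z, ∀ x, 0 < cellMass P x z → g (x, z) = 0 ∨ g (x, z) = 1 := by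
    rcases htend with ⟨z0, hz0⟩ | ⟨z0, hz0⟩
    · refine ⟨z0, fun x hmx => ?_⟩
      by_cases h : x = xx z0
      · subst h; left; rw [hgxx z0, hz0]
      · rw [hgo z0 x h]; exact uz z0 x hmx h
    · refine ⟨z0, fun x hmx => ?_⟩
      by_cases h : x = xx z0
      · subst h; right; rw [hgxx z0, hz0]
      · rw [hgo z0 x h]; exact uz z0 x hmx h
  have hld : loss P g = loss P f + t * Ssum := by
    have h1 : loss P g - loss P f
        = ∑ x, ∑ z, (P (x, z, false) - P (x, z, true)) * (g (x, z) - f (x, z)) := by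
      rw [loss, loss, ← Finset.sum_sub_distrib]
      refine Finset.sum_congr rfl fun x _ => ?_
      rw [← Finset.sum_sub_distrib]
      refine Finset.sum_congr rfl fun z _ => ?_
      ring
    rw [Finset.sum_comm] at h1
    have h2 : ∀ z, ∑ x, (P (x, z, false) - P (x, z, true)) * (g (x, z) - f (x, z))
        = t * d z := by
      intro z
      rw [Finset.sum_eq_single (xx z)]
      · rw [hgxx z, hadef]
        show (P (xx z, z, false) - P (xx z, z, true)) * (f (xx z, z) + t * c z - f (xx z, z))
          = t * (c z * (P (xx z, z, false) - P (xx z, z, true)))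
        ring
      · intro x _ hne
        rw [hgo z x hne, sub_self, mul_zero]
      · intro h; exact absurd (Finset.mem_univ _) h
    rw [Fintype.sum_bool, h2 true, h2 false] at h1
    rw [hSdef]
    linarith
  refine ⟨r + t, g, hgu, hgpre, hgone, hgfpr, hgdet, ?_⟩
  rw [hld]
  linarith

end new


/-- The minimum of `r ↦ L(f_r)` over `[0,1]` is attained at an FP-boundary. -/
theorem stmt14 {X : Type*} [Fintype X] (P : X × Bool × Bool → ℝ) (hP : IsDist P)
    (h0 : ∀ z, 0 < ∑ x, P (x, z, false)) (hm : MergedScores P) (L : ℝ → ℝ)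
    (hL : ∀ r ∈ Set.Icc (0 : ℝ) 1, ∀ f : X × Bool → ℝ,
      InUnit f → IsPrefix P f →
      (∀ x z, 0 < cellMass P x z → score P x z = 1 → f (x, z) = 1) →
      (∀ z, fpr P f z = r) → loss P f = L r) :
    ∃ r' ∈ Set.Icc (0 : ℝ) 1, IsFPBoundary P r' ∧
      ∀ r ∈ Set.Icc (0 : ℝ) 1, L r' ≤ L r := by
  classical
  obtain ⟨hP0, -⟩ := hP
  have hmemB : ∀ u : ℝ, IsFPBoundary P u →
      u ∈ (Finset.univ : Finset (Bool × Finset X)).image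
        (fun w => (∑ x ∈ w.2, P (x, w.1, false)) / ∑ x, P (x, w.1, false)) := by
    intro u hu
    obtain ⟨g, hg1, -, -, hg4, z, hz⟩ := hu
    refine Finset.mem_image.mpr
      ⟨(z, Finset.univ.filter (fun x => 0 < P (x, z, false) ∧ g (x, z) = 1)),
        Finset.mem_univ _, ?_⟩
    rw [← hg4 z, fpr, det_sum hP0 g z hz]
  set B : Finset ℝ := ((Finset.univ : Finset (Bool × Finset X)).image
      (fun w => (∑ x ∈ w.2, P (x, w.1, false)) / ∑ x, P (x, w.1, false))).filter
      (fun u => 0 ≤ u ∧ u ≤ 1 ∧ IsFPBoundary P u) with hBdef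
  have h1B : (1:ℝ) ∈ B := by
    refine Finset.mem_filter.mpr ⟨?_, zero_le_one, le_refl 1, ?_⟩
    · exact Finset.mem_image.mpr ⟨(true, Finset.univ), Finset.mem_univ _,
        div_self (h0 true).ne'⟩
    · refine ⟨fun _ => 1, fun q => ⟨zero_le_one, le_refl 1⟩,
        fun z x x' _ _ _ _ => rfl, fun x z _ _ => rfl, fun z => ?_,
        true, fun x _ => Or.inr rfl⟩
      rw [fpr]
      simp only [one_mul]
      exact div_self (h0 z).ne'
  obtain ⟨r', hr'B, hminB⟩ := B.exists_min_image L ⟨1, h1B⟩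
  obtain ⟨-, hr'0, hr'1, hr'bd⟩ := Finset.mem_filter.mp hr'B
  refine ⟨r', ⟨hr'0, hr'1⟩, hr'bd, ?_⟩
  intro r hr
  have hthr := fun z => thr_fpr hP0 hm h0 hr.1 hr.2 z
  have hLr : loss P (thr P r) = L r :=
    hL r hr _ (thr_inunit P r) (thr_prefix hP0 r) (thr_score_one hP0 r) hthr
  obtain ⟨r'', g, hg1, hg2, hg3, hg4, hg5, hg6⟩ :=
    perturb hP0 hm h0 (thr_inunit P r) (thr_prefix hP0 r) (thr_score_one hP0 r) hthr
  have hr''i : r'' ∈ Set.Icc (0:ℝ) 1 := by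
    rw [← hg4 true]; exact fpr_mem hP0 h0 hg1 true
  have hLr'' : loss P g = L r'' := hL r'' hr''i g hg1 hg2 hg3 hg4
  have hbd : IsFPBoundary P r'' := ⟨g, hg1, hg2, hg3, hg4, hg5⟩
  have hr''B : r'' ∈ B :=
    Finset.mem_filter.mpr ⟨hmemB r'' hbd, hr''i.1, hr''i.2, hbd⟩
  calc L r' ≤ L r'' := hminB r'' hr''B
    _ = loss P g := hLr''.symm
    _ ≤ loss P (thr P r) := hg6
    _ = L r := hLr
end
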